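/- arXiv:1004.2133 — 3 statements merged into one kernel-verified Lean document; each statement's English description precedes it below -/
import Mathlib

section
/- Fix c > 0 and define ℓ(α,p) = (c p / Γ(p − α + 1)) (Γ(p − α) − Γ(p) Γ(1 − α)) for α ∈ (1,2) and p ∈ (1,α). Then there exist α* ∈ (1,2) and a strictly increasing function p* : (α*,2) → (1,2) satisfying lim_{α ↓ α*} p*(α) = 1, lim_{α ↑ 2} p*(α) = 2 and p*(α) < α for all α ∈ (α*,2), such that: (i) ℓ(α,p) > 0 if α ∈ (α*,2) and p ∈ (1, p*(α)); (ii) ℓ(α,p) < 0 if either α ∈ (1,α*) and p ∈ (1,α), or α ∈ [α*,2) and p ∈ (p*(α), α) (where p*(α*) is interpreted as 1); and (iii) ℓ(α, p*(α)) = 0 for all α ∈ (α*,2). -/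
open Set Filter Topology

noncomputable section

/-- The function `ℓ(α,p) = (c p / Γ(p − α + 1)) (Γ(p − α) − Γ(p) Γ(1 − α))`. -/
def ell (c α p : ℝ) : ℝ :=
  c * p / Real.Gamma (p - α + 1) * (Real.Gamma (p - α) - Real.Gamma p * Real.Gamma (1 - α))

namespace BreakdownAux
open Real

/-- log Gamma -/
def f (x : ℝ) : ℝ := Real.log (Real.Gamma x)

lemma f_eq : f = Real.log ∘ Real.Gamma := rfl

lemma fconv : ConvexOn ℝ (Ioi 0) f := by rw [f_eq]; exact Real.convexOn_log_Gamma

lemma f_one : f 1 = 0 := by simp [f, Real.Gamma_one]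

lemma f_two : f 2 = 0 := by simp [f, Real.Gamma_two]

lemma f_rec {x : ℝ} (hx : 0 < x) : f (x + 1) = f x + Real.log x := by
  rw [f, f, Real.Gamma_add_one hx.ne', Real.log_mul hx.ne' (Real.Gamma_pos_of_pos hx).ne']
  ring

lemma f_three : f 3 = Real.log 2 := by
  have := f_rec (x := 2) (by norm_num)
  norm_num at this
  rw [show (3:ℝ) = 2 + 1 by norm_num, f_rec (by norm_num), f_two, zero_add]

lemma f_half : f (1/2) = Real.log π / 2 := by
  rw [f, Real.Gamma_one_half_eq, Real.log_sqrt Real.pi_pos.le]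

lemma contAt_f {x : ℝ} (hx : 0 < x) : ContinuousAt f x := by
  have h1 : ContinuousAt Real.Gamma x := by
    refine (Real.differentiableAt_Gamma fun m => ?_).continuousAt
    intro h
    have : -(m:ℝ) ≤ 0 := by simp [neg_nonpos]
    rw [h] at hx; linarith
  exact (Real.continuousAt_log (Real.Gamma_pos_of_pos hx).ne').comp h1

/-- slope monotonicity in both endpoints -/
lemma fslope_mono {a b c d : ℝ} (ha : 0 < a) (hc : 0 < c) (hab : a < b) (hcd : c < d)
    (hac : a ≤ c) (hbd : b ≤ d) :
    (f b - f a) / (b - a) ≤ (f d - f c) / (d - c) := by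
  have hb : (0:ℝ) < b := lt_trans ha hab
  have hd : (0:ℝ) < d := lt_trans hc hcd
  have had : a < d := lt_of_le_of_lt hac hcd
  have h1 : (f b - f a) / (b - a) ≤ (f d - f a) / (d - a) :=
    fconv.secant_mono (mem_Ioi.2 ha) (mem_Ioi.2 hb) (mem_Ioi.2 hd) hab.ne' had.ne' hbd
  have h2 : (f a - f d) / (a - d) ≤ (f c - f d) / (c - d) :=
    fconv.secant_mono (mem_Ioi.2 hd) (mem_Ioi.2 ha) (mem_Ioi.2 hc) had.ne hcd.ne hac
  have e1 : (f d - f a) / (d - a) = (f a - f d) / (a - d) := by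
    rw [← neg_div_neg_eq]; ring_nf
  have e2 : (f c - f d) / (c - d) = (f d - f c) / (d - c) := by
    rw [← neg_div_neg_eq]; ring_nf
  linarith [e1 ▸ h1, e2 ▸ h2]

lemma f_nonpos {x : ℝ} (hx1 : 1 ≤ x) (hx2 : x ≤ 2) : f x ≤ 0 := by
  rcases eq_or_lt_of_le hx1 with h | h
  · rw [← h, f_one]
  · have := fconv.secant_mono (a := 1) (x := x) (y := 2) (by norm_num) (by
      exact mem_Ioi.2 (by linarith)) (by norm_num) (by exact h.ne') (by norm_num) hx2
    rw [f_one, f_two] at this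
    simp only [sub_zero] at this
    norm_num at this
    have hx0 : 0 < x - 1 := by linarith
    have h3 : f x / (x-1) * (x-1) ≤ 0 := mul_nonpos_of_nonpos_of_nonneg this hx0.le
    rwa [div_mul_cancel₀ _ hx0.ne'] at h3

lemma f_lb {x : ℝ} (hx1 : 1 ≤ x) (hx2 : x ≤ 2) : -Real.log π ≤ f x := by
  have hπ : 0 ≤ Real.log π := Real.log_nonneg (by linarith [Real.pi_gt_three])
  rcases eq_or_lt_of_le hx1 with h | h
  · rw [← h, f_one]; linarith
  · have := fconv.secant_mono (a := 1) (x := 1/2) (y := x) (by norm_num) (by norm_num)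
      (mem_Ioi.2 (by linarith)) (by norm_num) h.ne' (by linarith)
    rw [f_one, f_half] at this
    have h1 : (Real.log π / 2 - 0) / (1/2 - 1) = -Real.log π := by ring
    rw [h1] at this
    simp only [sub_zero] at this
    have hx0 : 0 < x - 1 := by linarith
    have h3 : -Real.log π * (x-1) ≤ f x / (x-1) * (x-1) :=
      mul_le_mul_of_nonneg_right this hx0.le
    rw [div_mul_cancel₀ _ hx0.ne'] at h3
    nlinarith

lemma f_lb01 {x : ℝ} (hx1 : 0 < x) (hx2 : x ≤ 1) : -Real.log π ≤ f x := by
  have h1 : f (x + 1) = f x + Real.log x := f_rec hx1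
  have h2 : -Real.log π ≤ f (x+1) := f_lb (by linarith) (by linarith)
  have h3 : Real.log x ≤ 0 := Real.log_nonpos hx1.le hx2
  linarith

lemma f_34 : 0 ≤ f (3/4) := by
  have := fconv.secant_mono (a := 1) (x := 3/4) (y := 2) (by norm_num) (by norm_num)
    (by norm_num) (by norm_num) (by norm_num) (by norm_num)
  rw [f_one, f_two] at this
  simp only [sub_zero] at this
  norm_num at this
  nlinarith



/-- convexity of `x ↦ log (x+c) - log (x+c-σ)` on `Ioi σ`, for `c ≥ 0 < σ`. -/
lemma logterm_convex {σ c : ℝ} (hσ : 0 < σ) (hc : 0 ≤ c) :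
    ConvexOn ℝ (Ioi σ) (fun x => Real.log (x + c) - Real.log (x + c - σ)) := by
  set g : ℝ → ℝ := fun x => Real.log (x + c) - Real.log (x + c - σ) with hg
  have key : ∀ x ∈ Ioi σ, HasDerivAt g ((x + c)⁻¹ - (x + c - σ)⁻¹) x := by
    intro x hx
    have hx1 : (0:ℝ) < x + c := by have := mem_Ioi.1 hx; linarith
    have hx2 : (0:ℝ) < x + c - σ := by have := mem_Ioi.1 hx; linarith
    have d1 : HasDerivAt (fun x : ℝ => Real.log (x + c)) ((x + c)⁻¹) x := by
      simpa [Function.comp_def] using (Real.hasDerivAt_log hx1.ne').comp x ((hasDerivAt_id x).add_const c)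
    have d2 : HasDerivAt (fun x : ℝ => Real.log (x + c - σ)) ((x + c - σ)⁻¹) x := by
      simpa [Function.comp_def] using (Real.hasDerivAt_log hx2.ne').comp x
        (((hasDerivAt_id x).add_const c).sub_const σ)
    exact d1.sub d2
  have hderiv : ∀ x ∈ Ioi σ, deriv g x = (x + c)⁻¹ - (x + c - σ)⁻¹ :=
    fun x hx => (key x hx).deriv
  refine convexOn_of_deriv2_nonneg (convex_Ioi σ) ?_ ?_ ?_ ?_
  · intro x hx; exact ((key x hx).differentiableAt).continuousAt.continuousWithinAt
  · intro x hx
    rw [interior_Ioi] at hx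
    exact ((key x hx).differentiableAt).differentiableWithinAt
  · intro x hx
    rw [interior_Ioi] at hx
    have hx1 : (0:ℝ) < x + c := by have := mem_Ioi.1 hx; linarith
    have hx2 : (0:ℝ) < x + c - σ := by have := mem_Ioi.1 hx; linarith
    have d1 : HasDerivAt (fun y : ℝ => (y + c)⁻¹ - (y + c - σ)⁻¹)
        (-(1/(x+c)^2) + 1/(x+c-σ)^2) x := by
      have e1 : HasDerivAt (fun y : ℝ => (y + c)⁻¹) (-(1/(x+c)^2)) x := by
        have := ((hasDerivAt_id x).add_const c).fun_inv hx1.ne'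
        simp only [id_eq] at this
        convert this using 1 <;> first | rfl | ring
      have e2 : HasDerivAt (fun y : ℝ => (y + c - σ)⁻¹) (-(1/(x+c-σ)^2)) x := by
        have := (((hasDerivAt_id x).add_const c).sub_const σ).fun_inv hx2.ne'
        simp only [id_eq] at this
        convert this using 1 <;> first | rfl | ring
      convert e1.sub e2 using 1 <;> first | rfl | ring
    have : DifferentiableAt ℝ (fun y : ℝ => (y + c)⁻¹ - (y + c - σ)⁻¹) x := d1.differentiableAt
    refine this.congr_of_eventuallyEq ?_ |>.differentiableWithinAt
    filter_upwards [Ioi_mem_nhds (mem_Ioi.1 hx)] with y hy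
    exact hderiv y hy
  · intro x hx
    rw [interior_Ioi] at hx
    have hx1 : (0:ℝ) < x + c := by have := mem_Ioi.1 hx; linarith
    have hx2 : (0:ℝ) < x + c - σ := by have := mem_Ioi.1 hx; linarith
    have heq : deriv (deriv g) x = deriv (fun y : ℝ => (y + c)⁻¹ - (y + c - σ)⁻¹) x := by
      apply Filter.EventuallyEq.deriv_eq
      filter_upwards [Ioi_mem_nhds (mem_Ioi.1 hx)] with y hy
      exact hderiv y hy
    have d1 : HasDerivAt (fun y : ℝ => (y + c)⁻¹ - (y + c - σ)⁻¹)
        (-(1/(x+c)^2) + 1/(x+c-σ)^2) x := by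
      have e1 : HasDerivAt (fun y : ℝ => (y + c)⁻¹) (-(1/(x+c)^2)) x := by
        have := ((hasDerivAt_id x).add_const c).fun_inv hx1.ne'
        simp only [id_eq] at this
        convert this using 1 <;> first | rfl | ring
      have e2 : HasDerivAt (fun y : ℝ => (y + c - σ)⁻¹) (-(1/(x+c-σ)^2)) x := by
        have := (((hasDerivAt_id x).add_const c).sub_const σ).fun_inv hx2.ne'
        simp only [id_eq] at this
        convert this using 1 <;> first | rfl | ring
      convert e1.sub e2 using 1 <;> first | rfl | ring
    have hd2 : deriv^[2] g x = -(1/(x+c)^2) + 1/(x+c-σ)^2 := by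
      simp only [Function.iterate_succ, Function.iterate_zero, Function.comp_apply, id]
      rw [heq, d1.deriv]
    rw [hd2]
    have h1 : 1/(x+c)^2 ≤ 1/(x+c-σ)^2 := by
      apply div_le_div_of_nonneg_left (by norm_num) (by positivity)
      nlinarith
    linarith

lemma convexOn_finset_sum {s : Set ℝ} (hs : Convex ℝ s) {ι : Type*} (t : Finset ι)
    {g : ι → ℝ → ℝ} (hg : ∀ i ∈ t, ConvexOn ℝ s (g i)) :
    ConvexOn ℝ s (fun x => ∑ i ∈ t, g i x) := by
  induction t using Finset.cons_induction with
  | empty => simpa using convexOn_const 0 hs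
  | cons a t ha ih =>
    simp only [Finset.sum_cons]
    exact (hg a (Finset.mem_cons_self a t)).add (ih fun i hi => hg i (Finset.mem_cons_of_mem hi))

/-- Key: convexity of the Gamma-increment `p ↦ f (p - σ) - f p` on `Ioi σ`. -/
lemma conv_incr {σ : ℝ} (hσ : 0 < σ) : ConvexOn ℝ (Ioi σ) (fun p => f (p - σ) - f p) := by
  set G : ℕ → ℝ → ℝ := fun n p =>
    -σ * Real.log n + ∑ m ∈ Finset.range (n + 1), (Real.log (p + m) - Real.log (p + m - σ))
    with hG
  have hGconv : ∀ n, ConvexOn ℝ (Ioi σ) (G n) := by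
    intro n
    exact (convexOn_const _ (convex_Ioi σ)).add <| convexOn_finset_sum (convex_Ioi σ) _
      (fun m _ => by
        simpa using logterm_convex hσ (Nat.cast_nonneg m))
  have hGtend : ∀ p ∈ Ioi σ, Tendsto (fun n => G n p) atTop (𝓝 (f (p - σ) - f p)) := by
    intro p hp
    have hp' : (0:ℝ) < p := lt_trans hσ (mem_Ioi.1 hp)
    have hpσ : (0:ℝ) < p - σ := sub_pos.2 (mem_Ioi.1 hp)
    have h1 := Real.BohrMollerup.tendsto_log_gamma hpσ
    have h2 := Real.BohrMollerup.tendsto_log_gamma hp'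
    have h3 := h1.sub h2
    have heq : (fun n => Real.BohrMollerup.logGammaSeq (p - σ) n -
        Real.BohrMollerup.logGammaSeq p n) = fun n => G n p := by
      funext n
      simp only [Real.BohrMollerup.logGammaSeq, hG]
      have e1 : ∑ m ∈ Finset.range (n+1), Real.log (p - σ + m) =
          ∑ m ∈ Finset.range (n+1), Real.log (p + m - σ) := by
        apply Finset.sum_congr rfl
        intro m _
        congr 1
        ring
      rw [e1, Finset.sum_sub_distrib]
      ring
    rw [heq] at h3
    exact h3
  constructor
  · exact convex_Ioi σ
  · intro x hx y hy a b ha hb hab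
    have hz : a • x + b • y ∈ Ioi σ := (convex_Ioi σ) hx hy ha hb hab
    have t1 := hGtend _ hz
    have t2 : Tendsto (fun n => a * G n x + b * G n y) atTop
        (𝓝 (a * (f (x - σ) - f x) + b * (f (y - σ) - f y))) :=
      ((hGtend x hx).const_mul a).add ((hGtend y hy).const_mul b)
    have hle : ∀ n, G n (a • x + b • y) ≤ a * G n x + b * G n y := by
      intro n
      simpa [smul_eq_mul] using (hGconv n).2 hx hy ha hb hab
    have := le_of_tendsto_of_tendsto' t1 t2 hle
    simpa [smul_eq_mul] using this

/-- The reduced function whose sign is opposite to that of `ell`. -/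
def hh (α p : ℝ) : ℝ :=
  f (p - α + 1) - f p - f (2 - α) + Real.log (α - 1) - Real.log (α - p)

lemma hh_one {α : ℝ} : hh α 1 = 0 := by
  have e : (1:ℝ) - α + 1 = 2 - α := by ring
  simp [hh, e, f_one]

lemma neglog_strictconvex (α : ℝ) :
    StrictConvexOn ℝ (Iio α) (fun p => -Real.log (α - p)) := by
  refine ⟨convex_Iio α, ?_⟩
  intro x hx y hy hxy a b ha hb hab
  have hx' : α - x ∈ Ioi (0:ℝ) := by simp only [mem_Iio] at hx; simp; linarith
  have hy' : α - y ∈ Ioi (0:ℝ) := by simp only [mem_Iio] at hy; simp; linarith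
  have hne : α - x ≠ α - y := by intro h; apply hxy; linarith
  have key := strictConcaveOn_log_Ioi.2 hx' hy' hne ha hb hab
  simp only [smul_eq_mul] at key ⊢
  have e : a * (α - x) + b * (α - y) = α - (a * x + b * y) := by linear_combination α * hab
  rw [e] at key
  show -Real.log (α - (a * x + b * y)) < a * -Real.log (α - x) + b * -Real.log (α - y)
  linarith

lemma sc_key {s : Set ℝ} {F : ℝ → ℝ} (hs : StrictConvexOn ℝ s F) {x y z : ℝ}
    (hx : x ∈ s) (hz : z ∈ s) (hxy : x < y) (hyz : y < z) :
    F y < ((z - y) / (z - x)) * F x + ((y - x) / (z - x)) * F z := by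
  have h0 : 0 < z - x := by linarith
  have ha : 0 < (z - y) / (z - x) := div_pos (by linarith) h0
  have hb : 0 < (y - x) / (z - x) := div_pos (by linarith) h0
  have hab : (z - y) / (z - x) + (y - x) / (z - x) = 1 := by field_simp; ring
  have key := hs.2 hx hz (by intro h; rw [h] at hxy; linarith) ha hb hab
  have e : ((z - y) / (z - x)) • x + ((y - x) / (z - x)) • z = y := by
    simp only [smul_eq_mul]; field_simp; ring
  rw [e] at key
  simpa [smul_eq_mul] using key

lemma hh_strictconvex {α : ℝ} (hα1 : 1 < α) (hα2 : α < 2) :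
    StrictConvexOn ℝ (Ico 1 α) (fun p => hh α p) := by
  have hσ : 0 < α - 1 := by linarith
  have c1 : ConvexOn ℝ (Ico 1 α) (fun p => f (p - α + 1) - f p) := by
    have h1 := (conv_incr hσ).subset
      (fun x hx => by simp only [mem_Ico] at hx; simp only [mem_Ioi]; linarith [hx.1])
      (convex_Ico 1 α)
    have e : (fun p : ℝ => f (p - (α - 1)) - f p) = (fun p => f (p - α + 1) - f p) := by
      funext p; congr 2; ring
    rwa [e] at h1
  have c2 : StrictConvexOn ℝ (Ico 1 α) (fun p => -Real.log (α - p)) :=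
    (neglog_strictconvex α).subset (fun x hx => hx.2) (convex_Ico 1 α)
  have c3 := c1.add_strictConvexOn c2
  have c4 := c3.add_convexOn
    (convexOn_const (Real.log (α - 1) - f (2 - α)) (convex_Ico 1 α))
  have e : ((fun p => f (p - α + 1) - f p) + fun p => -Real.log (α - p)) +
      (fun _ => Real.log (α - 1) - f (2 - α)) = fun p => hh α p := by
    funext p; simp only [Pi.add_apply, hh]; ring
  rwa [e] at c4

lemma hh_anti {p α₁ α₂ : ℝ} (hp : 1 < p) (h1 : p < α₁) (h12 : α₁ < α₂) (h2 : α₂ < 2) :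
    hh α₂ p < hh α₁ p := by
  have hu2 : (0:ℝ) < 2 - α₂ := by linarith
  have hu1 : (0:ℝ) < 2 - α₁ := by linarith
  have hs : (0:ℝ) < p - 1 := by linarith
  have slope := fslope_mono (a := 2 - α₂) (b := 2 - α₂ + (p - 1)) (c := 2 - α₁)
    (d := 2 - α₁ + (p - 1)) hu2 hu1 (by linarith) (by linarith) (by linarith) (by linarith)
  rw [show (2 - α₂ + (p - 1)) = p - α₂ + 1 by ring,
      show (2 - α₁ + (p - 1)) = p - α₁ + 1 by ring,
      show p - α₂ + 1 - (2 - α₂) = p - 1 by ring,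
      show p - α₁ + 1 - (2 - α₁) = p - 1 by ring] at slope
  have p1 : f (p - α₂ + 1) - f (2 - α₂) ≤ f (p - α₁ + 1) - f (2 - α₁) := by
    have := mul_le_mul_of_nonneg_right slope hs.le
    rwa [div_mul_cancel₀ _ hs.ne', div_mul_cancel₀ _ hs.ne'] at this
  have p2 : Real.log (α₂ - 1) - Real.log (α₂ - p) <
      Real.log (α₁ - 1) - Real.log (α₁ - p) := by
    have k1 : (0:ℝ) < α₁ - p := by linarith
    have k2 : (0:ℝ) < α₂ - p := by linarith
    have k3 : (0:ℝ) < α₁ - 1 := by linarith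
    have k4 : (0:ℝ) < α₂ - 1 := by linarith
    rw [← Real.log_div k4.ne' k2.ne', ← Real.log_div k3.ne' k1.ne']
    apply Real.log_lt_log (by positivity)
    rw [div_lt_div_iff₀ k2 k1]
    nlinarith
  simp only [hh]
  linarith

lemma contAt_hh_p {α p : ℝ} (hα1 : 1 < α) (hα2 : α < 2) (hp : 1 ≤ p) (hpα : p < α) :
    ContinuousAt (fun q => hh α q) p := by
  have h1 : (0:ℝ) < p - α + 1 := by linarith
  have h2 : (0:ℝ) < p := by linarith
  have h3 : α - p ≠ 0 := by intro h; rw [sub_eq_zero] at h; rw [h] at hpα; exact lt_irrefl _ hpα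
  have ci1 : ContinuousAt (fun q : ℝ => q - α + 1) p := by fun_prop
  have ci2 : ContinuousAt (fun q : ℝ => α - q) p := by fun_prop
  have c1 : ContinuousAt (fun q : ℝ => f (q - α + 1)) p :=
    ContinuousAt.comp (g := f) (f := fun q : ℝ => q - α + 1) (contAt_f h1) ci1
  have c2 : ContinuousAt (fun q : ℝ => Real.log (α - q)) p :=
    ContinuousAt.comp (g := Real.log) (f := fun q : ℝ => α - q) (Real.continuousAt_log h3) ci2
  exact (((c1.sub (contAt_f h2)).sub continuousAt_const).add continuousAt_const).sub c2

lemma contAt_hh_a {α p : ℝ} (hα1 : 1 < α) (hα2 : α < 2) (hp : 1 < p) (hpα : p < α) :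
    ContinuousAt (fun β => hh β p) α := by
  have h1 : (0:ℝ) < p - α + 1 := by linarith
  have h2 : (0:ℝ) < 2 - α := by linarith
  have h3 : α - p ≠ 0 := by intro h; rw [sub_eq_zero] at h; rw [h] at hpα; exact lt_irrefl _ hpα
  have h4 : α - 1 ≠ 0 := by intro h; rw [sub_eq_zero] at h; rw [h] at hα1; exact lt_irrefl _ hα1
  have c1 : ContinuousAt (fun β : ℝ => f (p - β + 1)) α :=
    ContinuousAt.comp (g := f) (f := fun β : ℝ => p - β + 1) (contAt_f h1) (by fun_prop)
  have c2 : ContinuousAt (fun β : ℝ => f (2 - β)) α :=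
    ContinuousAt.comp (g := f) (f := fun β : ℝ => 2 - β) (contAt_f h2) (by fun_prop)
  have c3 : ContinuousAt (fun β : ℝ => Real.log (β - 1)) α :=
    ContinuousAt.comp (g := Real.log) (f := fun β : ℝ => β - 1) (Real.continuousAt_log h4) (by fun_prop)
  have c4 : ContinuousAt (fun β : ℝ => Real.log (β - p)) α :=
    ContinuousAt.comp (g := Real.log) (f := fun β : ℝ => β - p) (Real.continuousAt_log h3) (by fun_prop)
  exact (((c1.sub continuousAt_const).sub c2).add c3).sub c4

lemma ell_sign {c α p : ℝ} (hc : 0 < c) (hα1 : 1 < α) (hα2 : α < 2)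
    (hp : 1 < p) (hpα : p < α) :
    (0 < ell c α p ↔ hh α p < 0) ∧ (ell c α p < 0 ↔ 0 < hh α p) ∧
      (ell c α p = 0 ↔ hh α p = 0) := by
  have hΓ1pos : 0 < Real.Gamma (p - α + 1) := Real.Gamma_pos_of_pos (by linarith)
  have hΓppos : 0 < Real.Gamma p := Real.Gamma_pos_of_pos (by linarith)
  have hΓ2pos : 0 < Real.Gamma (2 - α) := Real.Gamma_pos_of_pos (by linarith)
  have hαp : (0:ℝ) < α - p := by linarith
  have hα1' : (0:ℝ) < α - 1 := by linarith
  set A := Real.Gamma (p - α + 1) * (α - 1) with hA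
  set B := Real.Gamma p * Real.Gamma (2 - α) * (α - p) with hB
  have hApos : 0 < A := by positivity
  have hBpos : 0 < B := by positivity
  have hhAB : hh α p = Real.log A - Real.log B := by
    rw [hA, hB, Real.log_mul (by positivity) hα1'.ne',
      Real.log_mul (by positivity) hαp.ne', Real.log_mul hΓppos.ne' hΓ2pos.ne']
    simp only [hh, f]
    ring
  have g1 : Real.Gamma (p - α + 1) = (p - α) * Real.Gamma (p - α) :=
    Real.Gamma_add_one (by intro h; rw [sub_eq_zero] at h; rw [h] at hpα; exact lt_irrefl _ hpα)
  have g2 : Real.Gamma (2 - α) = (1 - α) * Real.Gamma (1 - α) := by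
    have h2 : (1:ℝ) - α ≠ 0 := by intro h; rw [sub_eq_zero] at h; rw [← h] at hα1; exact lt_irrefl _ hα1
    have := Real.Gamma_add_one h2
    rwa [show (1:ℝ) - α + 1 = 2 - α by ring] at this
  have key : ell c α p * (Real.Gamma (p - α + 1) * ((α - p) * (α - 1))) =
      (c * p) * (B - A) := by
    simp only [ell, hA, hB]
    field_simp
    rw [g1, g2]
    ring
  have hposmul : 0 < Real.Gamma (p - α + 1) * ((α - p) * (α - 1)) := by positivity
  have hcp : 0 < c * p := by positivity
  have e1 : 0 < ell c α p ↔ A < B := by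
    constructor
    · intro h
      nlinarith [mul_pos h hposmul, key]
    · intro h
      have h1 : 0 < ell c α p * (Real.Gamma (p - α + 1) * ((α - p) * (α - 1))) := by
        rw [key]; nlinarith
      by_contra hle
      push_neg at hle
      nlinarith [mul_nonpos_of_nonpos_of_nonneg hle hposmul.le]
  have e3 : ell c α p < 0 ↔ B < A := by
    constructor
    · intro h
      nlinarith [mul_neg_of_neg_of_pos h hposmul, key]
    · intro h
      have h1 : ell c α p * (Real.Gamma (p - α + 1) * ((α - p) * (α - 1))) < 0 := by
        rw [key]; nlinarith
      by_contra hle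
      push_neg at hle
      nlinarith [mul_nonneg hle hposmul.le]
  have e2 : hh α p < 0 ↔ A < B := by
    rw [hhAB, sub_neg]
    exact Real.log_lt_log_iff hApos hBpos
  have e4 : 0 < hh α p ↔ B < A := by
    rw [hhAB, sub_pos]
    exact Real.log_lt_log_iff hBpos hApos
  refine ⟨e1.trans e2.symm, e3.trans e4.symm, ?_⟩
  constructor
  · intro h
    have h1 : ell c α p * (Real.Gamma (p - α + 1) * ((α - p) * (α - 1))) = 0 := by
      rw [h]; ring
    rw [key] at h1
    have hAB : A = B := by
      rcases mul_eq_zero.1 h1 with h2 | h2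
      · exact absurd h2 hcp.ne'
      · linarith
    rw [hhAB, hAB, sub_self]
  · intro h
    rw [hhAB, sub_eq_zero] at h
    have hAB : A = B := by
      have := Real.exp_log hApos
      have := Real.exp_log hBpos
      rw [← Real.exp_log hApos, ← Real.exp_log hBpos, h]
    have h1 : ell c α p * (Real.Gamma (p - α + 1) * ((α - p) * (α - 1))) = 0 := by
      rw [key, hAB]; ring
    rcases mul_eq_zero.1 h1 with h2 | h2
    · exact h2
    · exact absurd h2 hposmul.ne'

lemma log2_le : Real.log 2 ≤ 0.7 := le_trans Real.log_two_lt_d9.le (by norm_num)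

lemma logpi_le : Real.log π ≤ 1.4 := by
  have h1 : Real.log π ≤ Real.log 4 :=
    (Real.log_le_log_iff Real.pi_pos (by norm_num)).2 (by linarith [Real.pi_lt_four])
  rw [show (4:ℝ) = 2 * 2 by norm_num, Real.log_mul (by norm_num) (by norm_num)] at h1
  linarith [log2_le]

lemma logpi_nonneg : 0 ≤ Real.log π := Real.log_nonneg (by linarith [Real.pi_gt_three])

lemma hh_pos_small {α p : ℝ} (hα1 : 1 < α) (hα54 : α ≤ 5/4) (hp : 1 < p) (hpα : p < α) :
    0 < hh α p := by
  have hσ : (0:ℝ) < α - 1 := by linarith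
  have hp1 : (0:ℝ) < p - 1 := by linarith
  have hαp : (0:ℝ) < α - p := by linarith
  have T1 : (p - 1) / (α - 1) ≤ Real.log (α - 1) - Real.log (α - p) := by
    rw [← Real.log_div hσ.ne' hαp.ne']
    have key := Real.log_le_sub_one_of_pos (x := (α - p) / (α - 1)) (by positivity)
    have e : Real.log ((α - p) / (α - 1)) = -Real.log ((α - 1) / (α - p)) := by
      rw [← Real.log_inv]
      congr 1
      rw [inv_div]
    rw [e] at key
    have e2 : (α - p) / (α - 1) - 1 = -((p - 1) / (α - 1)) := by
      field_simp; ring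
    rw [e2] at key
    linarith
  have T2 : f p ≤ (p - 1) * Real.log 2 := by
    have slope := fslope_mono (a := 1) (b := p) (c := 2) (d := 3) one_pos (by norm_num) hp
      (by norm_num) (by norm_num) (by linarith)
    rw [f_one, f_three, f_two] at slope
    have h2 := mul_le_mul_of_nonneg_right slope hp1.le
    rw [div_mul_cancel₀ _ (by exact hp1.ne' : p - 1 ≠ 0)] at h2
    norm_num at h2
    nlinarith
  have T3 : (p - 1) * (-(2 * Real.log π)) ≤ f (p - α + 1) - f (2 - α) := by
    have slope := fslope_mono (a := 1/2) (b := 3/4) (c := 2 - α) (d := p - α + 1)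
      (by norm_num) (by linarith) (by norm_num) (by linarith) (by linarith) (by linarith)
    rw [f_half, show p - α + 1 - (2 - α) = p - 1 by ring] at slope
    have hlb : -(2 * Real.log π) ≤ (f (3/4) - Real.log π / 2) / (3/4 - 1/2 : ℝ) := by
      have e : (f (3/4) - Real.log π / 2) / (3/4 - 1/2 : ℝ) = 4 * f (3/4) - 2 * Real.log π := by
        ring
      rw [e]
      linarith [f_34]
    have h3 := le_trans hlb slope
    have h4 := mul_le_mul_of_nonneg_right h3 hp1.le
    rw [div_mul_cancel₀ _ (by exact hp1.ne' : p - 1 ≠ 0)] at h4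
    linarith
  have hrecip : (4:ℝ) ≤ 1 / (α - 1) := by
    rw [le_div_iff₀ hσ]
    linarith
  have hT1' : (p - 1) * 4 ≤ (p - 1) / (α - 1) := by
    have := mul_le_mul_of_nonneg_left hrecip hp1.le
    calc (p - 1) * 4 ≤ (p - 1) * (1 / (α - 1)) := this
      _ = (p - 1) / (α - 1) := by ring
  simp only [hh]
  nlinarith [mul_le_mul_of_nonneg_left log2_le hp1.le,
    mul_le_mul_of_nonneg_left logpi_le hp1.le]

lemma hh_large {α p₁ : ℝ} (hα1 : 1 < α) (hα2 : α < 2) (hp₁ : 1 < p₁) (hp₁α : p₁ < α) :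
    ∃ p₂, p₂ ∈ Ioo p₁ α ∧ 0 < hh α p₂ := by
  set M := Real.log π + f (2 - α) - Real.log (α - 1) + 1 with hM
  set δ := min ((α - p₁) / 2) (Real.exp (-M)) with hδ
  have hδpos : 0 < δ := lt_min (by linarith) (Real.exp_pos _)
  have hδ1 : δ ≤ (α - p₁) / 2 := min_le_left _ _
  have hδ2 : δ ≤ Real.exp (-M) := min_le_right _ _
  have hδhalf : δ < 1 := by linarith
  refine ⟨α - δ, ⟨by linarith, by linarith⟩, ?_⟩
  have b1 : -Real.log π ≤ f (α - δ - α + 1) := by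
    have e : α - δ - α + 1 = 1 - δ := by ring
    rw [e]
    exact f_lb01 (by linarith) (by linarith)
  have b2 : f (α - δ) ≤ 0 := f_nonpos (by linarith) (by linarith)
  have b3 : M ≤ -Real.log δ := by
    have h1 : Real.log δ ≤ Real.log (Real.exp (-M)) :=
      (Real.log_le_log_iff hδpos (Real.exp_pos _)).2 hδ2
    rw [Real.log_exp] at h1
    linarith
  simp only [hh]
  rw [show α - (α - δ) = δ by ring]
  linarith

lemma hh_neg_far {p : ℝ} (hp1 : 1 < p) (hp2 : p < 2) :
    ∃ β, β < 2 ∧ p ≤ β ∧ ∀ α, β < α → α < 2 → hh α p < 0 := by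
  set C := -Real.log (p - 1) + 2 * Real.log π + Real.log (2 / (2 - p)) with hC
  clear_value C
  refine ⟨max ((2 + p) / 2) (2 - Real.exp (-C - 1)), ?_, ?_, ?_⟩
  · apply max_lt (by linarith) (by linarith [Real.exp_pos (-C - 1)])
  · exact le_max_of_le_left (by linarith)
  · intro α hβα hα2
    have hαp : (2 + p) / 2 < α := lt_of_le_of_lt (le_max_left _ _) hβα
    have hα2' : 2 - Real.exp (-C - 1) < α := lt_of_le_of_lt (le_max_right _ _) hβα
    have hpα : p < α := by linarith
    have hα1 : 1 < α := by linarith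
    have hx0 : (0:ℝ) < p - α + 1 := by linarith
    have b1 : f (p - α + 1) ≤ -Real.log (p - 1) := by
      have e := f_rec hx0
      have b11 : f (p - α + 1 + 1) ≤ 0 := f_nonpos (by linarith) (by linarith)
      have b12 : Real.log (p - 1) ≤ Real.log (p - α + 1) :=
        (Real.log_le_log_iff (by linarith) hx0).2 (by linarith)
      linarith
    have b2 : -f p ≤ Real.log π := by
      have := f_lb hp1.le hp2.le
      linarith
    have b3 : -f (2 - α) ≤ Real.log (2 - α) + Real.log π := by
      have h2α : (0:ℝ) < 2 - α := by linarith
      have e := f_rec h2α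
      rw [show (2 - α + 1) = 3 - α by ring] at e
      have := f_lb (x := 3 - α) (by linarith) (by linarith)
      linarith
    have b4 : Real.log (α - 1) ≤ 0 := Real.log_nonpos (by linarith) (by linarith)
    have b5 : -Real.log (α - p) ≤ Real.log (2 / (2 - p)) := by
      have h1 : (2 - p) / 2 ≤ α - p := by linarith
      have h2 : Real.log ((2 - p) / 2) ≤ Real.log (α - p) :=
        (Real.log_le_log_iff (by linarith) (by linarith)).2 h1
      have e : Real.log ((2 - p) / 2) = -Real.log (2 / (2 - p)) := by
        rw [← Real.log_inv]
        congr 1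
        rw [inv_div]
      linarith [e ▸ h2]
    have b6 : Real.log (2 - α) ≤ -C - 1 := by
      have h1 : 2 - α < Real.exp (-C - 1) := by linarith
      have h2 : Real.log (2 - α) < Real.log (Real.exp (-C - 1)) :=
        Real.log_lt_log (by linarith) h1
      rw [Real.log_exp] at h2
      linarith
    simp only [hh]
    linarith

def Sset : Set ℝ := {α | α ∈ Ioo (1:ℝ) 2 ∧ ∀ p ∈ Ioo (1:ℝ) α, 0 < hh α p}

lemma S54 : (5/4 : ℝ) ∈ Sset :=
  ⟨⟨by norm_num, by norm_num⟩, fun p hp => hh_pos_small (by norm_num) le_rfl hp.1 hp.2⟩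

lemma Sbdd : ∃ β, β < 2 ∧ ∀ γ ∈ Sset, γ ≤ β := by
  obtain ⟨β, hβ2, hβp, hβ⟩ := hh_neg_far (p := 3/2) (by norm_num) (by norm_num)
  refine ⟨β, hβ2, ?_⟩
  intro γ hγ
  by_contra hlt
  push_neg at hlt
  have h1 := hβ γ hlt hγ.1.2
  have h2 := hγ.2 (3/2) ⟨by norm_num, by linarith⟩
  linarith

def αst : ℝ := sSup Sset

lemma Sbdd' : BddAbove Sset := by
  obtain ⟨β, _, hub⟩ := Sbdd
  exact ⟨β, fun γ hγ => hub γ hγ⟩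

lemma αst_ge : 5/4 ≤ αst := le_csSup Sbdd' S54

lemma αst_one_lt : 1 < αst := by linarith [αst_ge]

lemma αst_lt_two : αst < 2 := by
  obtain ⟨β, hβ2, hub⟩ := Sbdd
  have := csSup_le ⟨5/4, S54⟩ hub
  calc αst ≤ β := this
    _ < 2 := hβ2

lemma S_all {α : ℝ} (hα : 1 < α) (hα2 : α < αst) : ∀ p ∈ Ioo (1:ℝ) α, 0 < hh α p := by
  obtain ⟨β, hβS, hαβ⟩ := exists_lt_of_lt_csSup ⟨5/4, S54⟩ hα2
  intro p hp
  have h1 := hβS.2 p ⟨hp.1, lt_trans hp.2 hαβ⟩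
  have h2 := hh_anti hp.1 hp.2 hαβ hβS.1.2
  linarith

lemma S_αst : ∀ p ∈ Ioo (1:ℝ) αst, 0 < hh αst p := by
  have hαst1 := αst_one_lt
  have hαst2 := αst_lt_two
  have key : ∀ p ∈ Ioo (1:ℝ) αst, ¬(hh αst p < 0) := by
    intro p hp hneg
    have hcont := contAt_hh_a hαst1 hαst2 hp.1 hp.2
    have h1 : ∀ᶠ β in 𝓝 αst, hh β p < 0 := hcont.eventually_lt_const hneg
    have h2 : ∀ᶠ β in 𝓝[<] αst, hh β p < 0 := h1.filter_mono nhdsWithin_le_nhds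
    have h3 : Ioo p αst ∈ 𝓝[<] αst := Ioo_mem_nhdsLT hp.2
    obtain ⟨β, hβneg, hβmem⟩ := (h2.and (eventually_of_mem h3 fun x hx => hx)).exists
    have := S_all (by linarith [hp.1, hβmem.1]) hβmem.2 p ⟨hp.1, hβmem.1⟩
    linarith
  intro p hp
  rcases lt_trichotomy (hh αst p) 0 with h | h | h
  · exact absurd h (key p hp)
  · exfalso
    have sc := hh_strictconvex hαst1 hαst2
    have hk := sc_key sc (x := 1) (y := (1 + p)/2) (z := p) ⟨le_rfl, hαst1⟩
      ⟨hp.1.le, hp.2⟩ (by linarith [hp.1]) (by linarith [hp.1])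
    rw [hh_one, h] at hk
    have hm : hh αst ((1 + p)/2) < 0 := by
      have : ((p - (1+p)/2)/(p - 1)) * 0 + (((1+p)/2 - 1)/(p - 1)) * 0 = 0 := by ring
      linarith [hk, this]
    exact key ((1 + p)/2) ⟨by linarith [hp.1], by linarith [hp.1, hp.2]⟩ hm
  · exact h

lemma exists_neg {α : ℝ} (hα1 : αst < α) (hα2 : α < 2) :
    ∃ p ∈ Ioo (1:ℝ) α, hh α p < 0 := by
  have h1 : (1:ℝ) < α := lt_trans αst_one_lt hα1
  have hnotin : α ∉ Sset := fun hin => absurd (le_csSup Sbdd' hin) (not_le.2 hα1)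
  have h2 : ¬∀ p ∈ Ioo (1:ℝ) α, 0 < hh α p := fun hforall => hnotin ⟨⟨h1, hα2⟩, hforall⟩
  push_neg at h2
  obtain ⟨p, hp, hle⟩ := h2
  rcases eq_or_lt_of_le hle with heq | hlt
  · refine ⟨(1 + p)/2, ⟨by linarith [hp.1], by linarith [hp.1, hp.2]⟩, ?_⟩
    have sc := hh_strictconvex h1 hα2
    have hk := sc_key sc (x := 1) (y := (1 + p)/2) (z := p) ⟨le_rfl, h1⟩
      ⟨hp.1.le, hp.2⟩ (by linarith [hp.1]) (by linarith [hp.1])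
    rw [hh_one, heq] at hk
    have : ((p - (1+p)/2)/(p - 1)) * 0 + (((1+p)/2 - 1)/(p - 1)) * 0 = 0 := by ring
    linarith [hk, this]
  · exact ⟨p, hp, hlt⟩

lemma exists_pstar {α : ℝ} (hα1 : αst < α) (hα2 : α < 2) :
    ∃ q, q ∈ Ioo (1:ℝ) α ∧ hh α q = 0 ∧ (∀ r ∈ Ioo (1:ℝ) q, hh α r < 0) ∧
      ∀ r ∈ Ioo q α, 0 < hh α r := by
  have h1 : (1:ℝ) < α := lt_trans αst_one_lt hα1
  obtain ⟨p₁, hp₁, hneg⟩ := exists_neg hα1 hα2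
  obtain ⟨p₂, hp₂, hpos⟩ := hh_large h1 hα2 hp₁.1 hp₁.2
  have hcont : ContinuousOn (fun q => hh α q) (Icc p₁ p₂) := by
    intro x hx
    exact (contAt_hh_p h1 hα2 (by linarith [hp₁.1, hx.1]) (by linarith [hp₂.2, hx.2])).continuousWithinAt
  obtain ⟨q, hq, hq0'⟩ := intermediate_value_Ioo hp₂.1.le hcont ⟨hneg, hpos⟩
  have hq0 : hh α q = 0 := hq0'
  have hqmem : q ∈ Ioo (1:ℝ) α := ⟨lt_trans hp₁.1 hq.1, lt_trans hq.2 hp₂.2⟩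
  have sc := hh_strictconvex h1 hα2
  refine ⟨q, hqmem, hq0, ?_, ?_⟩
  · intro r hr
    have hk := sc_key sc (x := 1) (y := r) (z := q) ⟨le_rfl, h1⟩
      ⟨hqmem.1.le, hqmem.2⟩ hr.1 hr.2
    rw [hh_one, hq0] at hk
    have : ((q - r)/(q - 1)) * 0 + ((r - 1)/(q - 1)) * 0 = 0 := by ring
    linarith [hk, this]
  · intro r hr
    have hk := sc_key sc (x := 1) (y := q) (z := r) ⟨le_rfl, h1⟩
      ⟨by linarith [hqmem.1, hr.1], hr.2⟩ hqmem.1 hr.1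
    rw [hh_one, hq0] at hk
    have hcoef : 0 < (q - 1)/(r - 1) := div_pos (by linarith [hqmem.1]) (by linarith [hqmem.1, hr.1])
    by_contra hc
    push_neg at hc
    nlinarith [mul_nonpos_of_nonneg_of_nonpos hcoef.le hc]

def pstar (α : ℝ) : ℝ :=
  if hα : αst < α ∧ α < 2 then (exists_pstar hα.1 hα.2).choose else 1

lemma pstar_spec {α : ℝ} (hα1 : αst < α) (hα2 : α < 2) :
    pstar α ∈ Ioo (1:ℝ) α ∧ hh α (pstar α) = 0 ∧
      (∀ r ∈ Ioo (1:ℝ) (pstar α), hh α r < 0) ∧ ∀ r ∈ Ioo (pstar α) α, 0 < hh α r := by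
  rw [pstar, dif_pos (⟨hα1, hα2⟩ : αst < α ∧ α < 2)]
  exact (exists_pstar hα1 hα2).choose_spec

lemma lt_pstar_of_neg {α q : ℝ} (hα1 : αst < α) (hα2 : α < 2) (hq : q ∈ Ioo (1:ℝ) α)
    (hneg : hh α q < 0) : q < pstar α := by
  obtain ⟨hmem, h0, _, hpos'⟩ := pstar_spec hα1 hα2
  rcases lt_trichotomy q (pstar α) with h | h | h
  · exact h
  · exfalso; rw [h, h0] at hneg; exact lt_irrefl 0 hneg
  · exfalso; linarith [hpos' q ⟨h, hq.2⟩]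

lemma pstar_lt_of_pos {α q : ℝ} (hα1 : αst < α) (hα2 : α < 2) (hq : q ∈ Ioo (1:ℝ) α)
    (hpos : 0 < hh α q) : pstar α < q := by
  obtain ⟨hmem, h0, hneg', _⟩ := pstar_spec hα1 hα2
  rcases lt_trichotomy q (pstar α) with h | h | h
  · exfalso; linarith [hneg' q ⟨hq.1, h⟩]
  · exfalso; rw [h, h0] at hpos; exact lt_irrefl 0 hpos
  · exact h

end BreakdownAux

open BreakdownAux in
theorem breakdown_points_exist {c : ℝ} (hc : 0 < c) :
    ∃ αs ∈ Set.Ioo (1:ℝ) 2, ∃ ps : ℝ → ℝ,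
      StrictMonoOn ps (Set.Ioo αs 2) ∧
      (∀ α ∈ Set.Ioo αs 2, ps α ∈ Set.Ioo (1:ℝ) 2) ∧
      Tendsto ps (𝓝[>] αs) (𝓝 1) ∧
      Tendsto ps (𝓝[<] (2:ℝ)) (𝓝 2) ∧
      (∀ α ∈ Set.Ioo αs 2, ps α < α) ∧
      -- (i) positivity
      (∀ α ∈ Set.Ioo αs 2, ∀ p ∈ Set.Ioo 1 (ps α), 0 < ell c α p) ∧
      -- (ii) negativity
      (∀ α ∈ Set.Ioo (1:ℝ) αs, ∀ p ∈ Set.Ioo 1 α, ell c α p < 0) ∧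
      (∀ p ∈ Set.Ioo 1 αs, ell c αs p < 0) ∧
      (∀ α ∈ Set.Ioo αs 2, ∀ p ∈ Set.Ioo (ps α) α, ell c α p < 0) ∧
      -- (iii) the zero curve
      (∀ α ∈ Set.Ioo αs 2, ell c α (ps α) = 0) := by
  have hαst1 := αst_one_lt
  have hαst2 := αst_lt_two
  refine ⟨αst, ⟨hαst1, hαst2⟩, pstar, ?_, ?_, ?_, ?_, ?_, ?_, ?_, ?_, ?_, ?_⟩
  · intro α₁ h₁ α₂ h₂ h12
    obtain ⟨hmem₁, h0₁, -, -⟩ := pstar_spec h₁.1 h₁.2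
    have hanti := hh_anti hmem₁.1 hmem₁.2 h12 h₂.2
    rw [h0₁] at hanti
    exact lt_pstar_of_neg h₂.1 h₂.2 ⟨hmem₁.1, lt_trans hmem₁.2 h12⟩ hanti
  · intro α hα
    obtain ⟨hmem, -, -, -⟩ := pstar_spec hα.1 hα.2
    exact ⟨hmem.1, lt_trans hmem.2 hα.2⟩
  · rw [tendsto_order]
    constructor
    · intro b hb
      filter_upwards [Ioo_mem_nhdsGT hαst2] with α hα
      exact lt_of_lt_of_le hb (pstar_spec hα.1 hα.2).1.1.le
    · intro b hb
      set p₀ := min ((1 + b)/2) ((1 + αst)/2) with hp₀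
      have hp₀1 : 1 < p₀ := lt_min (by linarith) (by linarith)
      have hp₀b : p₀ < b := lt_of_le_of_lt (min_le_left _ _) (by linarith)
      have hp₀α : p₀ < αst := lt_of_le_of_lt (min_le_right _ _) (by linarith)
      have hpos := S_αst p₀ ⟨hp₀1, hp₀α⟩
      have hcont := contAt_hh_a hαst1 hαst2 hp₀1 hp₀α
      have hev : ∀ᶠ α in 𝓝 αst, 0 < hh α p₀ := hcont.eventually_const_lt hpos
      filter_upwards [hev.filter_mono nhdsWithin_le_nhds, Ioo_mem_nhdsGT hαst2]
        with α hα1' hα2'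
      have := pstar_lt_of_pos hα2'.1 hα2'.2 ⟨hp₀1, lt_trans hp₀α hα2'.1⟩ hα1'
      linarith
  · rw [tendsto_order]
    constructor
    · intro b hb
      rcases le_or_gt b 1 with hb1 | hb1
      · filter_upwards [Ioo_mem_nhdsLT hαst2] with α hα
        exact lt_of_le_of_lt hb1 (pstar_spec hα.1 hα.2).1.1
      · obtain ⟨β, hβ2, hbβ, hβ⟩ := hh_neg_far hb1 hb
        have hmax : max β αst < 2 := max_lt hβ2 hαst2
        filter_upwards [Ioo_mem_nhdsLT hmax] with α hα
        have hβα : β < α := lt_of_le_of_lt (le_max_left _ _) hα.1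
        have hαstα : αst < α := lt_of_le_of_lt (le_max_right _ _) hα.1
        exact lt_pstar_of_neg hαstα hα.2 ⟨hb1, by linarith⟩ (hβ α hβα hα.2)
    · intro b hb
      filter_upwards [Ioo_mem_nhdsLT hαst2] with α hα
      exact lt_trans (lt_trans (pstar_spec hα.1 hα.2).1.2 hα.2) hb
  · intro α hα
    exact (pstar_spec hα.1 hα.2).1.2
  · intro α hα p hp
    obtain ⟨hmem, -, hneg', -⟩ := pstar_spec hα.1 hα.2
    have hα1 : (1:ℝ) < α := lt_trans hαst1 hα.1
    have hpα : p < α := lt_trans hp.2 hmem.2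
    exact ((ell_sign hc hα1 hα.2 hp.1 hpα).1).2 (hneg' p hp)
  · intro α hα p hp
    have h := S_all hα.1 hα.2 p hp
    exact ((ell_sign hc hα.1 (lt_trans hα.2 hαst2) hp.1 hp.2).2.1).2 h
  · intro p hp
    exact ((ell_sign hc hαst1 hαst2 hp.1 hp.2).2.1).2 (S_αst p hp)
  · intro α hα p hp
    obtain ⟨hmem, -, -, hpos'⟩ := pstar_spec hα.1 hα.2
    have hα1 : (1:ℝ) < α := lt_trans hαst1 hα.1
    have hp1 : (1:ℝ) < p := lt_trans hmem.1 hp.1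
    exact ((ell_sign hc hα1 hα.2 hp1 hp.2).2.1).2 (hpos' p hp)
  · intro α hα
    obtain ⟨hmem, h0, -, -⟩ := pstar_spec hα.1 hα.2
    have hα1 : (1:ℝ) < α := lt_trans hαst1 hα.1
    exact ((ell_sign hc hα1 hα.2 hmem.1 hmem.2).2.2).2 h0
end
end

section
/- Let p > 1 and let S be a nonnegative random variable on a probability space with E[S^p] < ∞. Define G(z) = E[(z ∨ S)^p] for z ≥ 0. If z₀ > 0 satisfies P(S = z₀) = 0, then G is differentiable at z₀ with G'(z₀) = p z₀^{p−1} P(S ≤ z₀). -/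
open Set Filter MeasureTheory Topology

noncomputable section

lemma rpow_sub_rpow_le_aux {p b a : ℝ} (hp : 1 ≤ p) (hb : 0 ≤ b) (hab : b ≤ a) :
    a ^ p - b ^ p ≤ p * a ^ (p - 1) * (a - b) := by
  have ha : 0 ≤ a := hb.trans hab
  have hC : ∀ x ∈ Set.Icc b a, ‖p * x ^ (p - 1)‖ ≤ p * a ^ (p - 1) := by
    intro x hx
    have hx0 : 0 ≤ x := hb.trans hx.1
    have h1 : x ^ (p - 1) ≤ a ^ (p - 1) :=
      Real.rpow_le_rpow hx0 hx.2 (by linarith)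
    have : 0 ≤ p * x ^ (p - 1) :=
      mul_nonneg (by linarith) (Real.rpow_nonneg hx0 _)
    rw [Real.norm_eq_abs, abs_of_nonneg this]
    exact mul_le_mul_of_nonneg_left h1 (by linarith)
  have hderiv : ∀ x ∈ Set.Icc b a,
      HasDerivWithinAt (fun y : ℝ => y ^ p) (p * x ^ (p - 1)) (Set.Icc b a) x := by
    intro x _
    have := Real.hasDerivAt_rpow_const (x := x) (p := p) (Or.inr hp)
    simpa [mul_comm] using this.hasDerivWithinAt
  have := (convex_Icc b a).norm_image_sub_le_of_norm_hasDerivWithin_le hderiv hC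
    (Set.left_mem_Icc.2 hab) (Set.right_mem_Icc.2 hab)
  have hmono : b ^ p ≤ a ^ p := Real.rpow_le_rpow hb hab (by linarith)
  rw [Real.norm_eq_abs, Real.norm_eq_abs, abs_of_nonneg (by linarith),
    abs_of_nonneg (by linarith)] at this
  linarith

theorem gain_function_derivative
    {Ω : Type*} [MeasureSpace Ω] [IsProbabilityMeasure (volume : Measure Ω)]
    {p : ℝ} (hp : 1 < p) {S : Ω → ℝ} (hSm : Measurable S) (hS0 : ∀ ω, 0 ≤ S ω)
    (hSp : Integrable (fun ω => S ω ^ p))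
    {z₀ : ℝ} (hz₀ : 0 < z₀) (hatom : (volume : Measure Ω) {ω | S ω = z₀} = 0) :
    HasDerivAt (fun z => ∫ ω, (max z (S ω)) ^ p)
      (p * z₀ ^ (p - 1) * ((volume : Measure Ω) {ω | S ω ≤ z₀}).toReal) z₀ := by
  set μ : Measure Ω := volume
  set ε : ℝ := z₀ / 2 with hε
  set M : ℝ := z₀ + z₀ / 2 with hM
  set C : ℝ := p * M ^ (p - 1) with hC
  have hMpos : 0 < M := by positivity
  have hCpos : 0 ≤ C := mul_nonneg (by linarith) (Real.rpow_nonneg hMpos.le _)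
  set A : Set Ω := {ω | S ω ≤ z₀} with hA
  have hAmeas : MeasurableSet A := hSm measurableSet_Iic
  set F' : Ω → ℝ := A.indicator (fun _ => p * z₀ ^ (p - 1)) with hF'
  -- measurability of F z for each z
  have hmeas : ∀ z : ℝ, AEStronglyMeasurable (fun ω => (max z (S ω)) ^ p) μ := by
    intro z
    exact (by measurability : Measurable fun ω => (max z (S ω)) ^ p).aestronglyMeasurable
  -- integrability of F z₀
  have hint : Integrable (fun ω => (max z₀ (S ω)) ^ p) μ := by
    refine Integrable.mono' ((integrable_const (z₀ ^ p)).add hSp) (hmeas z₀) ?_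
    filter_upwards with ω
    simp only [Pi.add_apply]
    have hm : 0 ≤ max z₀ (S ω) := le_max_of_le_left hz₀.le
    rw [Real.norm_eq_abs, abs_of_nonneg (Real.rpow_nonneg hm _)]
    rcases le_total (S ω) z₀ with h | h
    · rw [max_eq_left h]
      have : 0 ≤ S ω ^ p := Real.rpow_nonneg (hS0 ω) _
      linarith
    · rw [max_eq_right h]
      have : 0 ≤ z₀ ^ p := Real.rpow_nonneg hz₀.le _
      linarith
  -- measurability of F'
  have hF'meas : AEStronglyMeasurable F' μ :=
    (measurable_const.indicator hAmeas).aestronglyMeasurable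
  -- Lipschitz estimate
  have hlip : ∀ ω, LipschitzOnWith (Real.nnabs C)
      (fun z => (max z (S ω)) ^ p) (Metric.ball z₀ ε) := by
    intro ω
    apply LipschitzOnWith.of_dist_le_mul
    have key : ∀ x ∈ Metric.ball z₀ ε, ∀ y ∈ Metric.ball z₀ ε, y ≤ x →
        (max x (S ω)) ^ p - (max y (S ω)) ^ p ≤ C * (x - y) := by
      intro x hx y hy hyx
      rcases le_or_gt x (S ω) with h | h
      · rw [max_eq_right h, max_eq_right (hyx.trans h)]
        simp only [sub_self]
        exact mul_nonneg hCpos (by linarith)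
      · rw [max_eq_left h.le]
        have hxball := Metric.mem_ball.1 hx
        have hyball := Metric.mem_ball.1 hy
        rw [Real.dist_eq, abs_lt] at hxball hyball
        have hb0 : 0 ≤ max y (S ω) := le_max_of_le_right (hS0 ω)
        have hbx : max y (S ω) ≤ x := max_le hyx h.le
        have h1 : x ^ p - (max y (S ω)) ^ p ≤ p * x ^ (p - 1) * (x - max y (S ω)) :=
          rpow_sub_rpow_le_aux hp.le hb0 hbx
        have hx0 : 0 ≤ x := by
          have : 0 < x := by
            have := hxball.1; rw [hε] at this; linarith
          linarith
        have hxM : x ≤ M := by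
          have := hxball.2; rw [hε, hM] at *; linarith
        have h2 : x ^ (p - 1) ≤ M ^ (p - 1) :=
          Real.rpow_le_rpow hx0 hxM (by linarith)
        have h3 : x - max y (S ω) ≤ x - y := by
          have : y ≤ max y (S ω) := le_max_left _ _
          linarith
        have h4 : p * x ^ (p - 1) * (x - max y (S ω)) ≤ C * (x - y) := by
          apply mul_le_mul
          · exact mul_le_mul_of_nonneg_left h2 (by linarith)
          · exact h3
          · linarith [max_le hyx h.le]
          · exact hCpos
        linarith
    intro x hx y hy
    have hcoe : (Real.nnabs C : ℝ) = C := by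
      rw [Real.coe_nnabs, abs_of_nonneg hCpos]
    rw [Real.dist_eq, Real.dist_eq, hcoe]
    rcases le_total y x with h | h
    · have hfm : (max y (S ω)) ^ p ≤ (max x (S ω)) ^ p :=
        Real.rpow_le_rpow (le_max_of_le_right (hS0 ω))
          (max_le_max h le_rfl) (by linarith)
      rw [abs_of_nonneg (by linarith), abs_of_nonneg (by linarith)]
      exact key x hx y hy h
    · have hfm : (max x (S ω)) ^ p ≤ (max y (S ω)) ^ p :=
        Real.rpow_le_rpow (le_max_of_le_right (hS0 ω))
          (max_le_max h le_rfl) (by linarith)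
      rw [abs_of_nonpos (by linarith), abs_of_nonpos (by linarith)]
      have := key y hy x hx h
      linarith
  -- a.e. differentiability at z₀
  have hdiff : ∀ᵐ ω ∂μ, HasDerivAt (fun z => (max z (S ω)) ^ p) (F' ω) z₀ := by
    have hne : ∀ᵐ ω ∂μ, S ω ≠ z₀ := by
      rw [ae_iff]
      simpa using hatom
    filter_upwards [hne] with ω hω
    rcases lt_or_gt_of_ne hω with h | h
    · -- S ω < z₀ : locally F z ω = z ^ p
      have hev : ∀ᶠ z in 𝓝 z₀, (max z (S ω)) ^ p = z ^ p := by
        filter_upwards [eventually_gt_nhds h] with z hz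
        rw [max_eq_left hz.le]
      have hd : HasDerivAt (fun z : ℝ => z ^ p) (p * z₀ ^ (p - 1)) z₀ := by
        have := Real.hasDerivAt_rpow_const (x := z₀) (p := p) (Or.inl hz₀.ne')
        simpa [mul_comm] using this
      have hF'val : F' ω = p * z₀ ^ (p - 1) := by
        rw [hF', Set.indicator_of_mem (by exact h.le : ω ∈ A)]
      rw [hF'val]
      exact hd.congr_of_eventuallyEq hev
    · -- S ω > z₀ : locally constant
      have hev : ∀ᶠ z in 𝓝 z₀, (max z (S ω)) ^ p = (S ω) ^ p := by
        filter_upwards [eventually_lt_nhds h] with z hz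
        rw [max_eq_right hz.le]
      have hF'val : F' ω = 0 := by
        rw [hF', Set.indicator_of_notMem (by exact not_le.2 h : ω ∉ A)]
      rw [hF'val]
      exact (hasDerivAt_const z₀ ((S ω) ^ p)).congr_of_eventuallyEq hev
  have εpos : 0 < ε := by rw [hε]; linarith
  have main := hasDerivAt_integral_of_dominated_loc_of_lip
    (F := fun z ω => (max z (S ω)) ^ p) (F' := F') (bound := fun _ => C)
    (Metric.ball_mem_nhds z₀ εpos) (Eventually.of_forall fun z => hmeas z) hint hF'meas
    (Eventually.of_forall hlip) (integrable_const C) hdiff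
  have hval : ∫ ω, F' ω ∂μ = p * z₀ ^ (p - 1) * (μ A).toReal := by
    rw [hF', integral_indicator_const _ hAmeas]
    simp [mul_comm, measureReal_def]
  have := main.2
  rwa [hval] at this
end
end

section
/- Let α ∈ (1,2), p ∈ (1,α) and c > 0. Let S be a strictly positive random variable with E[S^p] < ∞ whose distribution function F_S is continuously differentiable on (0,∞) with density f_S, and suppose there exist constants C_f > 0 and C_F > 0 such that f_S(z) ~ C_f z^{α−2} and F_S(z) ~ C_F z^{α−1} as z ↓ 0. Define G(z) = z^p + ∫_{z^p}^∞ (1 − F_S(w^{1/p})) dw and H(z) = z G'(z) + (c/(α−1)) ∫₀^z G''(x) (z−x)^{1−α} dx − p G(z) for z > 0. Then lim_{z ↓ 0} H(z) = −p G(0) = −p E[S^p] < 0. -/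
open Set Filter MeasureTheory Topology

noncomputable section

/-- Change of variables for the beta-type integral. -/
lemma cov_beta (β γ z : ℝ) (hz : 0 < z) :
    ∫ x in (0:ℝ)..z, x ^ β * (z - x) ^ γ
      = z ^ (β + γ + 1) * ∫ u in (0:ℝ)..1, u ^ β * (1 - u) ^ γ := by
  have h := intervalIntegral.smul_integral_comp_mul_left
    (f := fun x => x ^ β * (z - x) ^ γ) (a := 0) (b := 1) z
  rw [mul_zero, mul_one] at h
  rw [← h]
  have hcongr : EqOn (fun u : ℝ => (z * u) ^ β * (z - z * u) ^ γ)
      (fun u : ℝ => z ^ (β + γ) * (u ^ β * (1 - u) ^ γ)) (uIcc (0:ℝ) 1) := by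
    intro u hu
    rw [uIcc_of_le (by norm_num : (0:ℝ) ≤ 1)] at hu
    have hu0 : 0 ≤ u := hu.1
    have hu1 : 0 ≤ 1 - u := by linarith [hu.2]
    have e1 : z - z * u = z * (1 - u) := by ring
    simp only [e1, Real.mul_rpow hz.le hu0, Real.mul_rpow hz.le hu1]
    rw [Real.rpow_add hz β γ]
    ring
  rw [intervalIntegral.integral_congr hcongr, intervalIntegral.integral_const_mul,
    smul_eq_mul, ← mul_assoc]
  congr 1
  rw [show β + γ + 1 = β + γ + 1 from rfl, Real.rpow_add_one hz.ne' (β + γ)]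
  ring


lemma tendsto_rpow_nhdsGT_zero {q : ℝ} (hq : 0 < q) :
    Tendsto (fun z : ℝ => z ^ q) (𝓝[>] (0:ℝ)) (𝓝 0) := by
  have h : ContinuousWithinAt (fun z : ℝ => z ^ q) (Ioi 0) 0 :=
    (Real.continuous_rpow_const hq.le).continuousWithinAt
  simpa [ContinuousWithinAt, Real.zero_rpow hq.ne'] using h

set_option maxHeartbeats 1000000 in
theorem H_limit_at_zero
    {Ω : Type*} [MeasureSpace Ω] [IsProbabilityMeasure (volume : Measure Ω)]
    {α p c : ℝ} (hα : α ∈ Set.Ioo (1:ℝ) 2) (hp : p ∈ Set.Ioo 1 α) (hc : 0 < c)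
    {S : Ω → ℝ} (hSm : Measurable S) (hSpos : ∀ ω, 0 < S ω)
    (hSp : Integrable (fun ω => S ω ^ p))
    {Fs fs : ℝ → ℝ}
    -- `Fs` is the distribution function of `S`
    (hFs : ∀ z, Fs z = ((volume : Measure Ω) {ω | S ω ≤ z}).toReal)
    -- `Fs` is continuously differentiable on `(0,∞)` with density `fs`
    (hfs : ∀ z ∈ Set.Ioi (0:ℝ), HasDerivAt Fs (fs z) z)
    (hfsc : ContinuousOn fs (Set.Ioi 0))
    -- asymptotics at zero
    {Cf CF : ℝ} (hCf : 0 < Cf) (hCF : 0 < CF)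
    (hfs0 : Tendsto (fun z => fs z / (Cf * z ^ (α - 2))) (𝓝[>] (0:ℝ)) (𝓝 1))
    (hFs0 : Tendsto (fun z => Fs z / (CF * z ^ (α - 1))) (𝓝[>] (0:ℝ)) (𝓝 1)) :
    let G : ℝ → ℝ := fun z => z ^ p + ∫ w in Set.Ioi (z ^ p), (1 - Fs (w ^ (1 / p)))
    let H : ℝ → ℝ := fun z => z * deriv G z
      + (c / (α - 1)) * (∫ x in (0:ℝ)..z, deriv (deriv G) x * (z - x) ^ (1 - α))
      - p * G z
    Tendsto H (𝓝[>] (0:ℝ)) (𝓝 (-p * G 0)) ∧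
    G 0 = (∫ ω, S ω ^ p) ∧
    -p * (∫ ω, S ω ^ p) < 0 := by
  intro G H
  obtain ⟨hα1, hα2⟩ := hα
  obtain ⟨hp1, hpα⟩ := hp
  have hp0 : (0:ℝ) < p := by linarith
  -- basic facts about Fs
  have hFsnn : ∀ z, 0 ≤ Fs z := fun z => by rw [hFs]; exact ENNReal.toReal_nonneg
  have hFs1 : ∀ z, Fs z ≤ 1 := by
    intro z
    rw [hFs]
    calc ((volume : Measure Ω) {ω | S ω ≤ z}).toReal
        ≤ ((1:ENNReal)).toReal := ENNReal.toReal_mono ENNReal.one_ne_top prob_le_one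
      _ = 1 := ENNReal.toReal_one
  have hFsmono : Monotone Fs := by
    intro a b hab
    rw [hFs, hFs]
    exact ENNReal.toReal_mono (measure_ne_top _ _)
      (measure_mono fun ω h => le_trans h hab)
  have hFsmeas : Measurable Fs := hFsmono.measurable
  -- the integrand g
  set g : ℝ → ℝ := fun w => 1 - Fs (w ^ (1 / p)) with hgdef
  have hgmeas : Measurable g :=
    measurable_const.sub
      (hFsmeas.comp (Real.continuous_rpow_const (by positivity)).measurable)
  have hg0 : ∀ w, 0 ≤ g w := fun w => sub_nonneg.mpr (hFs1 _)
  have hg1 : ∀ w, g w ≤ 1 := fun w => by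
    have := hFsnn (w ^ (1/p)); simp only [hgdef]; linarith
  -- f = S^p and its tail measure
  set f : Ω → ℝ := fun ω => S ω ^ p with hfdef
  have hfnn : ∀ ω, 0 ≤ f ω := fun ω => Real.rpow_nonneg (hSpos ω).le p
  have hfm : Measurable f := (Real.continuous_rpow_const hp0.le).measurable.comp hSm
  set m : ℝ → ℝ := fun t => ((volume : Measure Ω) {ω | t < f ω}).toReal with hmdef
  have hmanti : Antitone m := by
    intro a b hab
    exact ENNReal.toReal_mono (measure_ne_top _ _)
      (measure_mono fun ω h => lt_of_le_of_lt hab h)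
  have hmmeas : Measurable m := hmanti.measurable
  have hmg : EqOn g m (Ioi 0) := by
    intro t ht
    have ht0 : (0:ℝ) < t := ht
    have hsetm : MeasurableSet {ω | t < f ω} := measurableSet_lt measurable_const hfm
    have hset : {ω | S ω ≤ t ^ (1/p)} = {ω | t < f ω}ᶜ := by
      ext ω
      simp only [mem_setOf_eq, mem_compl_iff, not_lt]
      constructor
      · intro h
        have h2 := Real.rpow_le_rpow (hSpos ω).le h hp0.le
        rwa [one_div, Real.rpow_inv_rpow ht0.le hp0.ne'] at h2
      · intro h
        have h2 := Real.rpow_le_rpow (hfnn ω) h (by positivity : (0:ℝ) ≤ 1/p)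
        rwa [one_div, Real.rpow_rpow_inv (hSpos ω).le hp0.ne', ← one_div] at h2
    have : Fs (t ^ (1/p)) = 1 - m t := by
      rw [hFs, hset, prob_compl_eq_one_sub hsetm,
        ENNReal.toReal_sub_of_le prob_le_one ENNReal.one_ne_top, ENNReal.toReal_one]
    simp only [hgdef, this]
    ring
  -- layer cake
  have hlayer : (∫ ω, S ω ^ p) = ∫ t in Ioi (0:ℝ), m t :=
    hSp.integral_eq_integral_meas_lt (Eventually.of_forall hfnn)
  -- integrability of g on (0, ∞)
  have hmInt : IntegrableOn m (Ioi 0) volume := by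
    refine ⟨hmmeas.aestronglyMeasurable, ?_⟩
    rw [hasFiniteIntegral_iff_ofReal (Eventually.of_forall fun t => ENNReal.toReal_nonneg)]
    have heq : ∫⁻ t in Ioi (0:ℝ), ENNReal.ofReal (m t)
        = ∫⁻ t in Ioi (0:ℝ), (volume : Measure Ω) {ω | t < f ω} := by
      refine setLIntegral_congr_fun measurableSet_Ioi (fun t ht => ?_)
      exact ENNReal.ofReal_toReal (measure_ne_top _ _)
    rw [heq, ← lintegral_eq_lintegral_meas_lt volume (Eventually.of_forall hfnn)
      hfm.aemeasurable]
    exact hSp.lintegral_lt_top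
  have hgInt : IntegrableOn g (Ioi 0) volume :=
    hmInt.congr_fun (fun t ht => (hmg ht).symm) measurableSet_Ioi
  -- the tail function φ
  set φ : ℝ → ℝ := fun t => ∫ w in Ioi t, g w with hφdef
  have hsplit : ∀ a s : ℝ, 0 ≤ a → a ≤ s → φ a = (∫ w in Ioc a s, g w) + φ s := by
    intro a s ha has
    have hint1 : IntegrableOn g (Ioc a s) volume :=
      hgInt.mono_set fun x hx => lt_of_le_of_lt ha hx.1
    have hint2 : IntegrableOn g (Ioi s) volume :=
      hgInt.mono_set fun x hx => lt_of_le_of_lt (ha.trans has) hx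
    simp only [hφdef]
    rw [← Ioc_union_Ioi_eq_Ioi has,
      setIntegral_union (Ioc_disjoint_Ioi le_rfl) measurableSet_Ioi hint1 hint2]
  have hφderiv : ∀ t : ℝ, 0 < t → HasDerivAt φ (-(g t)) t := by
    intro t ht
    have ha : (0:ℝ) < t/2 := by linarith
    have hgc : ContinuousAt g t := by
      have h1 : ContinuousAt Fs (t ^ (1/p)) :=
        (hfs _ (Real.rpow_pos_of_pos ht _)).continuousAt
      have h2 : ContinuousAt (fun w : ℝ => w ^ (1/p)) t :=
        Real.continuousAt_rpow_const t _ (Or.inl ht.ne')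
      have h3 := ContinuousAt.comp (g := Fs) (f := fun w : ℝ => w ^ (1/p)) (x := t) h1 h2
      exact continuousAt_const.sub h3
    have hii : IntervalIntegrable g volume (t/2) t := by
      rw [intervalIntegrable_iff_integrableOn_Ioc_of_le (by linarith)]
      exact hgInt.mono_set fun x hx => lt_trans ha hx.1
    have hFTC : HasDerivAt (fun s => ∫ x in (t/2)..s, g x) (g t) t :=
      intervalIntegral.integral_hasDerivAt_right hii
        (hgmeas.stronglyMeasurable.stronglyMeasurableAtFilter) hgc
    have hψ : HasDerivAt (fun s => φ (t/2) - ∫ x in (t/2)..s, g x) (-(g t)) t :=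
      hFTC.const_sub _
    refine hψ.congr_of_eventuallyEq ?_
    filter_upwards [isOpen_Ioi.mem_nhds (show t ∈ Ioi (t/2) by
      simp only [mem_Ioi]; linarith)] with s hs
    have hs' : t/2 < s := hs
    rw [intervalIntegral.integral_of_le hs'.le]
    have h := hsplit (t/2) s ha.le hs'.le
    linarith
  -- derivative of G on (0, ∞)
  have hGd : ∀ z : ℝ, 0 < z → HasDerivAt G (p * z ^ (p-1) * Fs z) z := by
    intro z hz
    have h1 : HasDerivAt (fun y : ℝ => y ^ p) (p * z ^ (p-1)) z :=
      Real.hasDerivAt_rpow_const (Or.inl hz.ne')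
    have h2 : HasDerivAt (fun y : ℝ => φ (y ^ p)) (-(g (z ^ p)) * (p * z ^ (p-1))) z :=
      (hφderiv _ (Real.rpow_pos_of_pos hz p)).comp (h := fun y : ℝ => y ^ p) z h1
    have h3 := h1.add h2
    have hgz : g (z ^ p) = 1 - Fs z := by
      simp only [hgdef]
      rw [one_div, Real.rpow_rpow_inv hz.le hp0.ne']
    have h4 : p * z^(p-1) + -(g (z^p)) * (p * z^(p-1)) = p * z^(p-1) * Fs z := by
      rw [hgz]; ring
    rw [h4] at h3
    exact h3
  have hderivG : ∀ z : ℝ, 0 < z → deriv G z = p * z ^ (p-1) * Fs z :=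
    fun z hz => (hGd z hz).deriv
  -- second derivative of G on (0, ∞)
  have hD2 : ∀ x : ℝ, 0 < x →
      deriv (deriv G) x = p * (p-1) * x ^ (p-2) * Fs x + p * x ^ (p-1) * fs x := by
    intro x hx
    have hEq : deriv G =ᶠ[𝓝 x] fun y => p * y ^ (p-1) * Fs y := by
      filter_upwards [isOpen_Ioi.mem_nhds (show x ∈ Ioi (0:ℝ) from hx)] with y hy
      exact hderivG y hy
    rw [hEq.deriv_eq]
    have hA : HasDerivAt (fun y : ℝ => p * y ^ (p-1)) (p * ((p-1) * x ^ (p-1-1))) x :=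
      (Real.hasDerivAt_rpow_const (Or.inl hx.ne')).const_mul p
    have hB := hfs x hx
    have hAB := hA.mul hB
    rw [show (fun y => p * y ^ (p - 1) * Fs y) = (fun y : ℝ => p * y ^ (p-1)) * Fs from rfl, hAB.deriv, show p-1-1 = p-2 from by ring]
    ring
  -- value of G at 0
  have hG00 : G 0 = φ 0 := by
    show (0:ℝ) ^ p + φ ((0:ℝ) ^ p) = φ 0
    rw [Real.zero_rpow hp0.ne', zero_add]
  have hG0 : G 0 = ∫ ω, S ω ^ p := by
    rw [hG00, hlayer]
    exact setIntegral_congr_fun measurableSet_Ioi hmg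
  -- positivity of the integral
  have hIpos : 0 < ∫ ω, S ω ^ p := by
    rw [integral_pos_iff_support_of_nonneg hfnn hSp]
    have hsup : Function.support f = univ :=
      eq_univ_of_forall fun ω => (Real.rpow_pos_of_pos (hSpos ω) p).ne'
    rw [hsup]
    simp
  -- Tendsto pieces
  -- (i)
  have hT1 : Tendsto (fun z => z * deriv G z) (𝓝[>] (0:ℝ)) (𝓝 0) := by
    have hb : Tendsto (fun z : ℝ => p * z ^ p) (𝓝[>] (0:ℝ)) (𝓝 0) := by
      simpa using (tendsto_rpow_nhdsGT_zero hp0).const_mul p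
    refine squeeze_zero_norm' ?_ hb
    filter_upwards [self_mem_nhdsWithin] with z hz
    have hz0 : (0:ℝ) < z := hz
    rw [hderivG z hz0, Real.norm_eq_abs]
    have hnn : 0 ≤ z * (p * z ^ (p-1) * Fs z) :=
      mul_nonneg hz0.le (mul_nonneg (mul_nonneg hp0.le
        (Real.rpow_nonneg hz0.le _)) (hFsnn z))
    rw [abs_of_nonneg hnn]
    have hzz : z * z ^ (p-1) = z ^ p := by
      rw [Real.rpow_sub hz0, Real.rpow_one]
      field_simp
    calc z * (p * z ^ (p-1) * Fs z) ≤ z * (p * z ^ (p-1) * 1) := by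
          have hnn2 : 0 ≤ p * z ^ (p-1) :=
            mul_nonneg hp0.le (Real.rpow_nonneg hz0.le _)
          nlinarith [mul_nonneg hz0.le hnn2, sub_nonneg.mpr (hFs1 z),
            mul_nonneg (mul_nonneg hz0.le hnn2) (sub_nonneg.mpr (hFs1 z))]
      _ = p * z ^ p := by rw [mul_one, ← hzz]; ring
  -- (iii) continuity of G at 0+
  have hGcont : Tendsto G (𝓝[>] (0:ℝ)) (𝓝 (G 0)) := by
    have key : ∀ z : ℝ, 0 < z → ‖G z - G 0‖ ≤ z ^ p := by
      intro z hz
      have hzp : (0:ℝ) < z ^ p := Real.rpow_pos_of_pos hz p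
      have hQint : IntegrableOn g (Ioc 0 (z^p)) volume :=
        hgInt.mono_set fun x hx => hx.1
      have hQ0 : 0 ≤ ∫ w in Ioc (0:ℝ) (z^p), g w :=
        setIntegral_nonneg measurableSet_Ioc fun x _ => hg0 x
      have hQ1 : (∫ w in Ioc (0:ℝ) (z^p), g w) ≤ z ^ p := by
        calc (∫ w in Ioc (0:ℝ) (z^p), g w) ≤ ∫ _ in Ioc (0:ℝ) (z^p), (1:ℝ) := by
              refine setIntegral_mono_on hQint ?_ measurableSet_Ioc fun x _ => hg1 x
              rw [integrableOn_const_iff]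
              exact Or.inr (by rw [Real.volume_Ioc]; exact ENNReal.ofReal_lt_top)
          _ = z ^ p := by
              simp [Real.volume_Ioc, ENNReal.toReal_ofReal hzp.le, hzp.le]
      have hGz : G z = z ^ p + φ (z ^ p) := rfl
      have hphi := hsplit 0 (z^p) le_rfl hzp.le
      rw [hGz, hG00]
      have : z ^ p + φ (z ^ p) - φ 0 = z ^ p - ∫ w in Ioc (0:ℝ) (z^p), g w := by
        rw [hphi]; ring
      rw [this, Real.norm_eq_abs]
      rw [abs_le]
      constructor <;> linarith
    have h0 : Tendsto (fun z => G z - G 0) (𝓝[>] (0:ℝ)) (𝓝 0) := by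
      refine squeeze_zero_norm' ?_ (tendsto_rpow_nhdsGT_zero hp0)
      filter_upwards [self_mem_nhdsWithin] with z hz
      exact key z hz
    have := h0.add_const (G 0)
    simpa using this
  -- (ii) the fractional integral term
  -- eventual bounds from the asymptotics
  have h1 : ∀ᶠ x in 𝓝[>] (0:ℝ), fs x / (Cf * x^(α-2)) < 2 :=
    hfs0.eventually_lt_const one_lt_two
  have h2 : ∀ᶠ x in 𝓝[>] (0:ℝ), 0 < fs x / (Cf * x^(α-2)) :=
    hfs0.eventually_const_lt one_pos
  have h3 : ∀ᶠ x in 𝓝[>] (0:ℝ), Fs x / (CF * x^(α-1)) < 2 :=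
    hFs0.eventually_lt_const one_lt_two
  have hev : ∀ᶠ x in 𝓝[>] (0:ℝ),
      |fs x| ≤ 2*Cf*x^(α-2) ∧ Fs x ≤ 2*CF*x^(α-1) := by
    filter_upwards [h1, h2, h3, self_mem_nhdsWithin] with x hx1 hx2 hx3 hx
    have hx0 : (0:ℝ) < x := hx
    have hcf : (0:ℝ) < Cf * x^(α-2) := by positivity
    have hcF : (0:ℝ) < CF * x^(α-1) := by positivity
    constructor
    · have hfspos : 0 < fs x := by
        have := mul_pos hx2 hcf
        rwa [div_mul_cancel₀ _ hcf.ne'] at this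
      rw [abs_of_pos hfspos]
      have := (div_lt_iff₀ hcf).mp hx1
      nlinarith
    · have := (div_lt_iff₀ hcF).mp hx3
      nlinarith
  obtain ⟨δ, hδpos, hδsub⟩ := Metric.mem_nhdsWithin_iff.mp hev
  set K : ℝ := 2*p*(p-1)*CF + 2*p*Cf with hKdef
  have hKpos : 0 < K := by
    have h1' : (0:ℝ) < p - 1 := by linarith
    have t1 : (0:ℝ) < 2*p*(p-1)*CF :=
      mul_pos (mul_pos (mul_pos two_pos hp0) h1') hCF
    have t2 : (0:ℝ) < 2*p*Cf := mul_pos (mul_pos two_pos hp0) hCf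
    rw [hKdef]; linarith
  have hD2bd : ∀ x : ℝ, 0 < x → x < δ →
      |deriv (deriv G) x| ≤ K * x ^ (p + α - 3) := by
    intro x hx hxδ
    have hmem : x ∈ Metric.ball (0:ℝ) δ ∩ Ioi 0 := by
      constructor
      · rw [Metric.mem_ball, Real.dist_eq, sub_zero, abs_of_pos hx]; exact hxδ
      · exact hx
    obtain ⟨hbd1, hbd2⟩ := hδsub hmem
    rw [hD2 x hx]
    have e1 : x^(p-2) * x^(α-1) = x^(p+α-3) := by
      rw [← Real.rpow_add hx]; congr 1; ring
    have e2 : x^(p-1) * x^(α-2) = x^(p+α-3) := by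
      rw [← Real.rpow_add hx]; congr 1; ring
    have hc1 : (0:ℝ) ≤ p * (p-1) * x^(p-2) := by
      have : (0:ℝ) < p - 1 := by linarith
      positivity
    have hc2 : (0:ℝ) ≤ p * x^(p-1) := by positivity
    calc |p * (p-1) * x ^ (p-2) * Fs x + p * x ^ (p-1) * fs x|
        ≤ |p * (p-1) * x ^ (p-2) * Fs x| + |p * x ^ (p-1) * fs x| := abs_add_le _ _
      _ = p * (p-1) * x ^ (p-2) * |Fs x| + p * x ^ (p-1) * |fs x| := by
          rw [abs_mul (p * (p-1) * x ^ (p-2)) (Fs x), abs_mul (p * x ^ (p-1)) (fs x),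
            abs_of_nonneg hc1, abs_of_nonneg hc2]
      _ ≤ p * (p-1) * x ^ (p-2) * (2*CF*x^(α-1)) + p * x ^ (p-1) * (2*Cf*x^(α-2)) := by
          have hFsb : |Fs x| ≤ 2*CF*x^(α-1) := by
            rw [abs_of_nonneg (hFsnn x)]; exact hbd2
          exact add_le_add (mul_le_mul_of_nonneg_left hFsb hc1)
            (mul_le_mul_of_nonneg_left hbd1 hc2)
      _ = 2*p*(p-1)*CF * (x^(p-2) * x^(α-1)) + 2*p*Cf * (x^(p-1) * x^(α-2)) := by ring
      _ = K * x ^ (p + α - 3) := by rw [e1, e2, hKdef]; ring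
  set J : ℝ := ∫ u in (0:ℝ)..1, u ^ (p + α - 3) * (1 - u) ^ (1 - α) with hJdef
  have hJ0 : 0 ≤ J := by
    rw [hJdef]
    refine intervalIntegral.integral_nonneg (by norm_num) fun u hu => ?_
    exact mul_nonneg (Real.rpow_nonneg hu.1 _)
      (Real.rpow_nonneg (by linarith [hu.2]) _)
  have hβ : (-1:ℝ) < p + α - 3 := by linarith
  have hγ : (-1:ℝ) < 1 - α := by linarith
  have hT2' : Tendsto
      (fun z => ∫ x in (0:ℝ)..z, deriv (deriv G) x * (z - x) ^ (1 - α))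
      (𝓝[>] (0:ℝ)) (𝓝 0) := by
    have hb : Tendsto (fun z : ℝ => K * (z ^ (p-1) * J)) (𝓝[>] (0:ℝ)) (𝓝 0) := by
      have := ((tendsto_rpow_nhdsGT_zero (show (0:ℝ) < p - 1 by linarith)).mul_const J).const_mul K
      simpa using this
    refine squeeze_zero_norm' ?_ hb
    have hIio : Iio δ ∈ 𝓝[>] (0:ℝ) :=
      mem_nhdsWithin_of_mem_nhds (Iio_mem_nhds hδpos)
    filter_upwards [self_mem_nhdsWithin, hIio] with z hz hzδ
    have hz0 : (0:ℝ) < z := hz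
    have hzδ' : z < δ := hzδ
    -- integrability of the bound
    have i1 : IntervalIntegrable (fun x : ℝ => x ^ (p + α - 3)) volume 0 z :=
      intervalIntegral.intervalIntegrable_rpow' hβ
    have i2 : IntervalIntegrable (fun x : ℝ => (z - x) ^ (1 - α)) volume 0 z := by
      have := (intervalIntegral.intervalIntegrable_rpow' (a := 0) (b := z) hγ).comp_sub_left z
      simpa using this.symm
    have hsub1 : uIcc (0:ℝ) (z/2) ⊆ uIcc (0:ℝ) z := by
      rw [uIcc_of_le (by linarith : (0:ℝ) ≤ z/2), uIcc_of_le hz0.le]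
      exact Icc_subset_Icc le_rfl (by linarith)
    have hsub2 : uIcc (z/2) z ⊆ uIcc (0:ℝ) z := by
      rw [uIcc_of_le (by linarith : z/2 ≤ z), uIcc_of_le hz0.le]
      exact Icc_subset_Icc (by linarith) le_rfl
    have half1 : IntervalIntegrable
        (fun x : ℝ => x ^ (p + α - 3) * (z - x) ^ (1 - α)) volume 0 (z/2) := by
      refine (i1.mono_set hsub1).mul_continuousOn ?_
      refine ContinuousOn.rpow_const (continuous_const.sub continuous_id).continuousOn ?_
      intro x hx
      rw [uIcc_of_le (by linarith : (0:ℝ) ≤ z/2)] at hx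
      left
      intro hzero
      have hzero' : z - x = 0 := hzero
      have hx2 := hx.2
      nlinarith
    have half2 : IntervalIntegrable
        (fun x : ℝ => x ^ (p + α - 3) * (z - x) ^ (1 - α)) volume (z/2) z := by
      refine (i2.mono_set hsub2).continuousOn_mul ?_
      refine ContinuousOn.rpow_const continuous_id.continuousOn ?_
      intro x hx
      rw [uIcc_of_le (by linarith : z/2 ≤ z)] at hx
      left
      intro hzero
      have hzero' : x = 0 := hzero
      have hx1 := hx.1
      nlinarith
    have hbint : IntervalIntegrable
        (fun x : ℝ => K * (x ^ (p + α - 3) * (z - x) ^ (1 - α))) volume 0 z :=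
      (half1.trans half2).const_mul K
    -- the pointwise bound
    have habs : ∀ x ∈ Set.uIoc (0:ℝ) z,
        ‖deriv (deriv G) x * (z - x) ^ (1 - α)‖
          ≤ K * (x ^ (p + α - 3) * (z - x) ^ (1 - α)) := by
      intro x hx
      rw [uIoc_of_le hz0.le] at hx
      have hx0 : (0:ℝ) < x := hx.1
      have hxz : x ≤ z := hx.2
      have hrp : (0:ℝ) ≤ (z - x) ^ (1 - α) := Real.rpow_nonneg (by linarith) _
      rw [Real.norm_eq_abs, abs_mul, abs_of_nonneg hrp]
      have := hD2bd x hx0 (lt_of_le_of_lt hxz hzδ')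
      calc |deriv (deriv G) x| * (z - x) ^ (1 - α)
          ≤ (K * x ^ (p + α - 3)) * (z - x) ^ (1 - α) :=
            mul_le_mul_of_nonneg_right this hrp
        _ = K * (x ^ (p + α - 3) * (z - x) ^ (1 - α)) := by ring
    have hnorm := intervalIntegral.norm_integral_le_abs_of_norm_le
      ((ae_restrict_iff' measurableSet_uIoc).mpr (Eventually.of_forall habs)) hbint
    calc ‖∫ x in (0:ℝ)..z, deriv (deriv G) x * (z - x) ^ (1 - α)‖
        ≤ |∫ x in (0:ℝ)..z, K * (x ^ (p + α - 3) * (z - x) ^ (1 - α))| := hnorm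
      _ = |K * (z ^ (p + α - 3 + (1 - α) + 1) * J)| := by
          rw [intervalIntegral.integral_const_mul, cov_beta _ _ _ hz0, ← hJdef]
      _ = K * (z ^ (p - 1) * J) := by
          rw [show p + α - 3 + (1 - α) + 1 = p - 1 from by ring]
          exact abs_of_nonneg (mul_nonneg hKpos.le
            (mul_nonneg (Real.rpow_nonneg hz0.le _) hJ0))
  have hT2 : Tendsto
      (fun z => (c/(α-1)) * ∫ x in (0:ℝ)..z, deriv (deriv G) x * (z - x) ^ (1 - α))
      (𝓝[>] (0:ℝ)) (𝓝 0) := by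
    have h := hT2'.const_mul (c/(α-1))
    rwa [mul_zero] at h
  refine ⟨?_, hG0, ?_⟩
  · have hcomb := (hT1.add hT2).sub (hGcont.const_mul p)
    have hval : -p * G 0 = 0 + 0 - p * G 0 := by ring
    rw [hval]
    exact hcomb
  · have := mul_pos hp0 hIpos
    nlinarith
end
end
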